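/- Let m and p be positive integers, l = 4mp + 2p − 1 and t = 4mp − 1, so that p' = (2m+1)p − 1. Partition {1,…,p'} into the intervals I_a, where I_a = {(a−1)p+1, …, ap} for 1 ≤ a ≤ 2m and I_{2m+1} = {2mp+1, …, (2m+1)p−1}. Then for k ∈ I_a: if a is odd, i_k = (2m+1)(k−1) + m + 1 − ((a−1)/2)·(2(2m+1)p − 1), and if a is even, i_k = (2m+1)(2p−k) + m + ((a−2)/2)·(2(2m+1)p − 1). -/
import Mathlib

/-- `σ_j = (-1)^{⌊(2j-1)t/l⌋}`. -/
def sigmaF (l t j : ℕ) : ℤ := (-1) ^ ((2 * j - 1) * t / l)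

/-- `r(j)`: the unique integer with `r(j) ≡ (2j-1)t (mod 2l)` and `-l < r(j) < l`. -/
def rF (l t j : ℕ) : ℤ :=
  if (((2 * j - 1) * t : ℕ) : ℤ) % (2 * l) < l then (((2 * j - 1) * t : ℕ) : ℤ) % (2 * l)
  else (((2 * j - 1) * t : ℕ) : ℤ) % (2 * l) - 2 * l

/-- `r'(j) = (|r(j)| + 1)/2`. -/
def rpF (l t j : ℕ) : ℤ := (|rF l t j| + 1) / 2

lemma rF_modEq (l t j : ℕ) : (2*(l:ℤ)) ∣ (((2 * j - 1) * t : ℕ):ℤ) - rF l t j := by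
  unfold rF
  split_ifs with h
  · exact ⟨(((2 * j - 1) * t : ℕ):ℤ) / (2*l), by rw [Int.emod_def]; ring⟩
  · exact ⟨(((2 * j - 1) * t : ℕ):ℤ) / (2*l) + 1, by rw [Int.emod_def]; ring⟩

lemma rF_bounds (l t j : ℕ) (hl : 0 < l) : -(l:ℤ) ≤ rF l t j ∧ rF l t j < l := by
  have hlz : (0:ℤ) < (l:ℤ) := by exact_mod_cast hl
  have h1 := Int.emod_nonneg (((2 * j - 1) * t : ℕ):ℤ) (by positivity : (2*(l:ℤ)) ≠ 0)
  have h2 := Int.emod_lt_of_pos (((2 * j - 1) * t : ℕ):ℤ) (by positivity : (0:ℤ) < 2*(l:ℤ))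
  unfold rF
  split_ifs with h <;> constructor <;> linarith

lemma rF_eq (l t j : ℕ) (hl : 0 < l) (y : ℤ) (h1 : -(l:ℤ) < y) (h2 : y < l)
    (hc : (2*(l:ℤ)) ∣ (((2 * j - 1) * t : ℕ):ℤ) - y) : rF l t j = y := by
  obtain ⟨hb1, hb2⟩ := rF_bounds l t j hl
  obtain ⟨c1, e1⟩ := hc
  obtain ⟨c2, e2⟩ := rF_modEq l t j
  have hd : (2*(l:ℤ)) ∣ rF l t j - y := ⟨c1 - c2, by rw [mul_sub, ← e1, ← e2]; ring⟩
  have hlz : (0:ℤ) < (l:ℤ) := by exact_mod_cast hl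
  have h0 : rF l t j - y = 0 :=
    Int.eq_zero_of_abs_lt_dvd hd (by rw [abs_lt]; constructor <;> linarith)
  linarith

lemma rF_odd (m p l t j : ℕ) (hm : 1 ≤ m) (hp : 1 ≤ p)
    (ht : t = 4*m*p - 1) (hj : 1 ≤ j) : rF l t j % 2 = 1 := by
  have hmz : (1:ℤ) ≤ (m:ℤ) := by exact_mod_cast hm
  have hpz : (1:ℤ) ≤ (p:ℤ) := by exact_mod_cast hp
  have hT : (t:ℤ) = 4*(m:ℤ)*(p:ℤ) - 1 := by
    rw [ht, Nat.cast_sub (by nlinarith : 1 ≤ 4*m*p)]; push_cast; ring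
  have hX : (((2 * j - 1) * t : ℕ):ℤ) = (2*(j:ℤ)-1)*(t:ℤ) := by
    rw [Nat.cast_mul, Nat.cast_sub (by omega : 1 ≤ 2*j)]; push_cast; ring
  have hodd : Odd ((2*(j:ℤ)-1)*(t:ℤ)) := by
    refine Odd.mul ⟨(j:ℤ)-1, by ring⟩ ?_
    rw [hT]; exact ⟨2*(m:ℤ)*(p:ℤ)-1, by ring⟩
  have hXodd : (((2 * j - 1) * t : ℕ):ℤ) % 2 = 1 := by
    rw [hX]; exact Int.odd_iff.mp hodd
  have h2dvd : (2:ℤ) ∣ 2*(l:ℤ) := dvd_mul_right (2:ℤ) (l:ℤ)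
  have hmm : (((2 * j - 1) * t : ℕ):ℤ) % (2*(l:ℤ)) % 2 = 1 := by
    rw [Int.emod_emod_of_dvd _ h2dvd]; exact hXodd
  unfold rF
  split_ifs with hsplit
  · exact hmm
  · omega

set_option maxHeartbeats 1000000 in
lemma rpF_inj (m p l t p' : ℕ) (hm : 1 ≤ m) (hp : 1 ≤ p)
    (hl : l = 4*m*p + 2*p - 1) (ht : t = 4*m*p - 1) (hp' : p' = (2*m+1)*p - 1)
    (j j' : ℕ) (hj1 : 1 ≤ j) (hj2 : j ≤ p') (hj1' : 1 ≤ j') (hj2' : j' ≤ p')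
    (h : |rF l t j| = |rF l t j'|) : j = j' := by
  have hmz : (1:ℤ) ≤ (m:ℤ) := by exact_mod_cast hm
  have hpz : (1:ℤ) ≤ (p:ℤ) := by exact_mod_cast hp
  have hT : (t:ℤ) = 4*(m:ℤ)*(p:ℤ) - 1 := by
    rw [ht, Nat.cast_sub (by nlinarith : 1 ≤ 4*m*p)]; push_cast; ring
  have hL : (l:ℤ) = 4*(m:ℤ)*(p:ℤ) + 2*(p:ℤ) - 1 := by
    rw [hl, Nat.cast_sub (by nlinarith : 1 ≤ 4*m*p + 2*p)]; push_cast; ring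
  have hP : (p':ℤ) = (2*(m:ℤ)+1)*(p:ℤ) - 1 := by
    rw [hp', Nat.cast_sub (by nlinarith : 1 ≤ (2*m+1)*p)]; push_cast; ring
  have h2p : 2*(p':ℤ) < (l:ℤ) := by rw [hP, hL]; nlinarith
  have hl0 : (0:ℤ) < (l:ℤ) := by rw [hL]; nlinarith
  have hbz : (-(2*(m:ℤ)+1))*(t:ℤ) + (m:ℤ)*(2*(l:ℤ)) = 1 := by rw [hT, hL]; ring
  have cancel : ∀ d : ℤ, (2*(l:ℤ)) ∣ (t:ℤ)*d → (2*(l:ℤ)) ∣ d := by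
    intro d hd
    have h1 : d = (-(2*(m:ℤ)+1))*((t:ℤ)*d) + (2*(l:ℤ))*((m:ℤ)*d) := by
      linear_combination (-d) * hbz
    rw [h1]
    exact dvd_add (hd.mul_left _) (Dvd.intro _ rfl)
  have hXj : (((2 * j - 1) * t : ℕ):ℤ) = (t:ℤ)*(2*(j:ℤ)-1) := by
    rw [Nat.cast_mul, Nat.cast_sub (by omega : 1 ≤ 2*j)]; push_cast; ring
  have hXj' : (((2 * j' - 1) * t : ℕ):ℤ) = (t:ℤ)*(2*(j':ℤ)-1) := by
    rw [Nat.cast_mul, Nat.cast_sub (by omega : 1 ≤ 2*j')]; push_cast; ring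
  have hmj := rF_modEq l t j
  have hmj' := rF_modEq l t j'
  have hjz1 : (1:ℤ) ≤ (j:ℤ) := by exact_mod_cast hj1
  have hjz2 : (j:ℤ) ≤ (p':ℤ) := by exact_mod_cast hj2
  have hjz1' : (1:ℤ) ≤ (j':ℤ) := by exact_mod_cast hj1'
  have hjz2' : (j':ℤ) ≤ (p':ℤ) := by exact_mod_cast hj2'
  have hBdiff : |(2*(j:ℤ)-1) - (2*(j':ℤ)-1)| < 2*(l:ℤ) := by
    rw [abs_lt]; constructor <;> linarith
  have hBsum : |(2*(j:ℤ)-1) + (2*(j':ℤ)-1)| < 2*(l:ℤ) := by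
    rw [abs_lt]; constructor <;> linarith
  rcases abs_eq_abs.mp h with h1 | h1
  · have key : (t:ℤ)*((2*(j:ℤ)-1) - (2*(j':ℤ)-1)) =
        ((((2 * j - 1) * t : ℕ):ℤ) - rF l t j) - ((((2 * j' - 1) * t : ℕ):ℤ) - rF l t j') := by
      rw [hXj, hXj', h1]; ring
    have hsub := dvd_sub hmj hmj'
    rw [← key] at hsub
    have hd2 := cancel _ hsub
    have h0 : (2*(j:ℤ)-1) - (2*(j':ℤ)-1) = 0 := Int.eq_zero_of_abs_lt_dvd hd2 hBdiff
    have : (j:ℤ) = (j':ℤ) := by linarith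
    exact_mod_cast this
  · have key : (t:ℤ)*((2*(j:ℤ)-1) + (2*(j':ℤ)-1)) =
        ((((2 * j - 1) * t : ℕ):ℤ) - rF l t j) + ((((2 * j' - 1) * t : ℕ):ℤ) - rF l t j') := by
      rw [hXj, hXj', h1]; ring
    have hadd := dvd_add hmj hmj'
    rw [← key] at hadd
    have hd2 := cancel _ hadd
    have h0 : (2*(j:ℤ)-1) + (2*(j':ℤ)-1) = 0 := Int.eq_zero_of_abs_lt_dvd hd2 hBsum
    exfalso; linarith

set_option maxHeartbeats 2000000 in
theorem stmt3 (m p l t p' : ℕ) (hm : 1 ≤ m) (hp : 1 ≤ p)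
    (hl : l = 4*m*p + 2*p - 1) (ht : t = 4*m*p - 1) (hp' : p' = (2*m+1)*p - 1)
    (a k : ℕ) (ha1 : 1 ≤ a) (ha2 : a ≤ 2*m+1)
    (hk1 : (a-1)*p + 1 ≤ k) (hk2 : k ≤ min (a*p) p')
    (j : ℕ) (hj1 : 1 ≤ j) (hj2 : j ≤ p') (hrj : rpF l t j = (k : ℤ)) :
    (j : ℤ) =
      if a % 2 = 1 then
        (2*(m:ℤ)+1) * ((k:ℤ) - 1) + (m:ℤ) + 1 - (((a:ℤ) - 1)/2) * (2*(2*(m:ℤ)+1)*(p:ℤ) - 1)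
      else
        (2*(m:ℤ)+1) * (2*(p:ℤ) - (k:ℤ)) + (m:ℤ) + (((a:ℤ) - 2)/2) * (2*(2*(m:ℤ)+1)*(p:ℤ) - 1) := by
  have hmz : (1:ℤ) ≤ (m:ℤ) := by exact_mod_cast hm
  have hpz : (1:ℤ) ≤ (p:ℤ) := by exact_mod_cast hp
  have hT : (t:ℤ) = 4*(m:ℤ)*(p:ℤ) - 1 := by
    rw [ht, Nat.cast_sub (by nlinarith : 1 ≤ 4*m*p)]; push_cast; ring
  have hL : (l:ℤ) = 4*(m:ℤ)*(p:ℤ) + 2*(p:ℤ) - 1 := by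
    rw [hl, Nat.cast_sub (by nlinarith : 1 ≤ 4*m*p + 2*p)]; push_cast; ring
  have hP : (p':ℤ) = (2*(m:ℤ)+1)*(p:ℤ) - 1 := by
    rw [hp', Nat.cast_sub (by nlinarith : 1 ≤ (2*m+1)*p)]; push_cast; ring
  have h2p : 2*(p':ℤ) < (l:ℤ) := by rw [hP, hL]; nlinarith
  have hlz : (0:ℤ) < (l:ℤ) := by rw [hL]; nlinarith
  have hl0 : 0 < l := by exact_mod_cast hlz
  have hka : k ≤ a*p := le_trans hk2 (min_le_left _ _)
  have hkp' : k ≤ p' := le_trans hk2 (min_le_right _ _)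
  have hkz1 : (1:ℤ) ≤ (k:ℤ) := by exact_mod_cast (by omega : 1 ≤ k)
  have hkzp : (k:ℤ) ≤ (p':ℤ) := by exact_mod_cast hkp'
  -- |rF l t j| = 2k-1
  have hodd := rF_odd m p l t j hm hp ht hj1
  have habsj : |rF l t j| = 2*(k:ℤ) - 1 := by
    simp only [rpF] at hrj
    rcases abs_cases (rF l t j) with ⟨e, _⟩ | ⟨e, _⟩ <;> rw [e] at hrj ⊢ <;> omega
  obtain ⟨b, hb⟩ : ∃ b, a = 2*b+1 ∨ a = 2*b+2 := ⟨(a-1)/2, by omega⟩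
  rcases hb with hb | hb
  · -- odd case
    have hbm : b ≤ m := by omega
    have hbmz : (b:ℤ) ≤ (m:ℤ) := by exact_mod_cast hbm
    have hk1' : 2*b*p + 1 ≤ k := by
      rw [hb] at hk1; simpa using hk1
    have hk1z : 2*(b:ℤ)*(p:ℤ) + 1 ≤ (k:ℤ) := by exact_mod_cast hk1'
    have hkaz : (k:ℤ) ≤ (2*(b:ℤ)+1)*(p:ℤ) := by
      rw [hb] at hka; exact_mod_cast hka
    set J : ℤ := (2*(m:ℤ)+1) * ((k:ℤ) - 1) + (m:ℤ) + 1 - (b:ℤ)*(2*(2*(m:ℤ)+1)*(p:ℤ) - 1)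
      with hJdef
    have hid : J = (2*(m:ℤ)+1)*((k:ℤ) - 1 - 2*(b:ℤ)*(p:ℤ)) + (m:ℤ) + (b:ℤ) + 1 := by
      rw [hJdef]; ring
    have hJ1 : 1 ≤ J := by
      have h1 : (0:ℤ) ≤ (2*(m:ℤ)+1)*((k:ℤ) - 1 - 2*(b:ℤ)*(p:ℤ)) :=
        mul_nonneg (by linarith) (by linarith)
      have hbz0 : (0:ℤ) ≤ (b:ℤ) := by positivity
      linarith [hid]
    have hJ2 : J ≤ (p':ℤ) := by
      by_cases hbm' : b = m
      · subst hbm'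
        have h' : (k:ℤ) - 1 - 2*(b:ℤ)*(p:ℤ) ≤ (p:ℤ) - 2 := by
          rw [hP] at hkzp; linarith
        have hmul := mul_le_mul_of_nonneg_left h' (by linarith : (0:ℤ) ≤ 2*(b:ℤ)+1)
        rw [hP]; linarith [hid, hmul]
      · have hbm2 : (b:ℤ) + 1 ≤ (m:ℤ) := by
          exact_mod_cast (by omega : b + 1 ≤ m)
        have h' : (k:ℤ) - 1 - 2*(b:ℤ)*(p:ℤ) ≤ (p:ℤ) - 1 := by linarith
        have hmul := mul_le_mul_of_nonneg_left h' (by linarith : (0:ℤ) ≤ 2*(m:ℤ)+1)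
        rw [hP]; linarith [hid, hmul]
    set j₀ : ℕ := J.toNat with hj₀def
    have hj₀ : (j₀:ℤ) = J := Int.toNat_of_nonneg (by linarith)
    have hj₀1 : 1 ≤ j₀ := by
      have : (1:ℤ) ≤ (j₀:ℤ) := by rw [hj₀]; exact hJ1
      exact_mod_cast this
    have hj₀2 : j₀ ≤ p' := by
      have : (j₀:ℤ) ≤ (p':ℤ) := by rw [hj₀]; exact hJ2
      exact_mod_cast this
    have hcast : (((2 * j₀ - 1) * t : ℕ):ℤ) = (2*J-1)*(t:ℤ) := by
      rw [Nat.cast_mul, Nat.cast_sub (by omega : 1 ≤ 2*j₀)]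
      push_cast
      rw [hj₀]
    have hdvd : (2*(l:ℤ)) ∣ (((2 * j₀ - 1) * t : ℕ):ℤ) - (-(2*(k:ℤ)-1)) :=
      ⟨(m:ℤ)*(2*(k:ℤ)-1) - (b:ℤ)*(4*(m:ℤ)*(p:ℤ)-1), by
        rw [hcast, hT, hL, hJdef]; ring⟩
    have hval : rF l t j₀ = -(2*(k:ℤ)-1) :=
      rF_eq l t j₀ hl0 _ (by linarith) (by linarith) hdvd
    have habs₀ : |rF l t j₀| = 2*(k:ℤ) - 1 := by
      rw [hval, abs_neg, abs_of_nonneg (by linarith)]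
    have hjj : j = j₀ :=
      rpF_inj m p l t p' hm hp hl ht hp' j j₀ hj1 hj2 hj₀1 hj₀2 (by rw [habsj, habs₀])
    have haz : (a:ℤ) = 2*(b:ℤ)+1 := by exact_mod_cast hb
    rw [if_pos (by omega : a % 2 = 1), haz,
      (by omega : ((2*(b:ℤ)+1) - 1)/2 = (b:ℤ)), hjj, hj₀, hJdef]
  · -- even case
    have hbm : b + 1 ≤ m := by omega
    have hbmz : (b:ℤ) + 1 ≤ (m:ℤ) := by exact_mod_cast hbm
    have hbz0 : (0:ℤ) ≤ (b:ℤ) := by positivity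
    have hk1' : (2*b+1)*p + 1 ≤ k := by
      rw [hb] at hk1; simpa using hk1
    have hk1z : (2*(b:ℤ)+1)*(p:ℤ) + 1 ≤ (k:ℤ) := by exact_mod_cast hk1'
    have hkaz : (k:ℤ) ≤ (2*(b:ℤ)+2)*(p:ℤ) := by
      rw [hb] at hka; exact_mod_cast hka
    set J : ℤ := (2*(m:ℤ)+1) * (2*(p:ℤ) - (k:ℤ)) + (m:ℤ) + (b:ℤ)*(2*(2*(m:ℤ)+1)*(p:ℤ) - 1)
      with hJdef
    have hid : J = (2*(m:ℤ)+1)*(2*(p:ℤ) - (k:ℤ) + 2*(b:ℤ)*(p:ℤ)) + (m:ℤ) - (b:ℤ) := by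
      rw [hJdef]; ring
    have hJ1 : 1 ≤ J := by
      have h1 : (0:ℤ) ≤ (2*(m:ℤ)+1)*(2*(p:ℤ) - (k:ℤ) + 2*(b:ℤ)*(p:ℤ)) :=
        mul_nonneg (by linarith) (by linarith)
      linarith [hid]
    have hJ2 : J ≤ (p':ℤ) := by
      have h' : 2*(p:ℤ) - (k:ℤ) + 2*(b:ℤ)*(p:ℤ) ≤ (p:ℤ) - 1 := by linarith
      have hmul := mul_le_mul_of_nonneg_left h' (by linarith : (0:ℤ) ≤ 2*(m:ℤ)+1)
      rw [hP]; linarith [hid, hmul]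
    set j₀ : ℕ := J.toNat with hj₀def
    have hj₀ : (j₀:ℤ) = J := Int.toNat_of_nonneg (by linarith)
    have hj₀1 : 1 ≤ j₀ := by
      have : (1:ℤ) ≤ (j₀:ℤ) := by rw [hj₀]; exact hJ1
      exact_mod_cast this
    have hj₀2 : j₀ ≤ p' := by
      have : (j₀:ℤ) ≤ (p':ℤ) := by rw [hj₀]; exact hJ2
      exact_mod_cast this
    have hcast : (((2 * j₀ - 1) * t : ℕ):ℤ) = (2*J-1)*(t:ℤ) := by
      rw [Nat.cast_mul, Nat.cast_sub (by omega : 1 ≤ 2*j₀)]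
      push_cast
      rw [hj₀]
    have hdvd : (2*(l:ℤ)) ∣ (((2 * j₀ - 1) * t : ℕ):ℤ) - (2*(k:ℤ)-1) :=
      ⟨(m:ℤ)*(4*(p:ℤ)-2*(k:ℤ)+1) - 1 + (b:ℤ)*(4*(m:ℤ)*(p:ℤ)-1), by
        rw [hcast, hT, hL, hJdef]; ring⟩
    have hval : rF l t j₀ = 2*(k:ℤ)-1 :=
      rF_eq l t j₀ hl0 _ (by linarith) (by linarith) hdvd
    have habs₀ : |rF l t j₀| = 2*(k:ℤ) - 1 := by
      rw [hval, abs_of_nonneg (by linarith)]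
    have hjj : j = j₀ :=
      rpF_inj m p l t p' hm hp hl ht hp' j j₀ hj1 hj2 hj₀1 hj₀2 (by rw [habsj, habs₀])
    have haz : (a:ℤ) = 2*(b:ℤ)+2 := by exact_mod_cast hb
    rw [if_neg (by omega : ¬ a % 2 = 1), haz,
      (by omega : ((2*(b:ℤ)+2) - 2)/2 = (b:ℤ)), hjj, hj₀, hJdef]
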